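/- For any prime power q and any d ≥ 1, h_q(q^d − 1) = d − 1. -/

import Mathlib

open Polynomial Module

/-- The cyclic shift operator on `Fin n → F`. -/
def cycShift (F : Type*) (n : ℕ) : (Fin n → F) → (Fin n → F) :=
  fun x i => x ⟨(i.1 + 1) % n, Nat.mod_lt _ (lt_of_le_of_lt (Nat.zero_le _) i.2)⟩

/-- A subspace `U ≤ F^n` is cyclically covering if the union of its cyclic shifts is `F^n`. -/
def IsCycCovering (F : Type*) [Field F] (n : ℕ) (U : Submodule F (Fin n → F)) : Prop :=
  ∀ x : Fin n → F, ∃ r : ℕ, (cycShift F n)^[r] x ∈ U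

/-- `hq F n` : the maximum codimension of a cyclically covering subspace of `F^n`. -/
noncomputable def hq (F : Type*) [Field F] [Fintype F] (n : ℕ) : ℕ :=
  sSup {k | ∃ U : Submodule F (Fin n → F), IsCycCovering F n U ∧
    Module.finrank F (Fin n → F) - Module.finrank F U = k}

/-! ### Auxiliary lemmas on the cyclic shift -/

lemma cycShift_apply {F : Type*} {n : ℕ} [NeZero n] (x : Fin n → F) (i : Fin n) :
    cycShift F n x i = x (i + 1) := by
  unfold cycShift
  congr 1
  ext
  simp [Fin.add_def, Nat.add_mod]

open Fin.NatCast Fin.CommRing in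
lemma cycShift_iterate {F : Type*} {n : ℕ} [NeZero n] (r : ℕ) (x : Fin n → F) (i : Fin n) :
    (cycShift F n)^[r] x i = x (i + r) := by
  induction r generalizing i with
  | zero => simp
  | succ k ih =>
    rw [Function.iterate_succ_apply', cycShift_apply, ih]
    congr 1
    push_cast
    ring

open Fin.NatCast Fin.CommRing in
lemma cycShift_iterate_self {F : Type*} {n : ℕ} [NeZero n] (x : Fin n → F) :
    (cycShift F n)^[n] x = x := by
  funext i
  rw [cycShift_iterate]
  simp

lemma cycShift_bijective {F : Type*} {n : ℕ} [NeZero n] : Function.Bijective (cycShift F n) := by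
  have hn : n - 1 + 1 = n := Nat.succ_pred_eq_of_pos (Nat.pos_of_ne_zero (NeZero.ne n))
  refine Function.bijective_iff_has_inverse.mpr ⟨(cycShift F n)^[n-1], fun x => ?_, fun x => ?_⟩
  · rw [← Function.iterate_succ_apply]
    simp only [Nat.succ_eq_add_one, hn, cycShift_iterate_self]
  · have := Function.iterate_succ_apply' (cycShift F n) (n-1) x
    rw [← this]
    simp only [Nat.succ_eq_add_one, hn, cycShift_iterate_self]

lemma cycShift_iterate_mod {F : Type*} {n : ℕ} [NeZero n] (r : ℕ) (x : Fin n → F) :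
    (cycShift F n)^[r % n] x = (cycShift F n)^[r] x := by
  conv_rhs => rw [← Nat.mod_add_div r n, Function.iterate_add_apply, Function.iterate_mul]
  congr 1
  rw [show (cycShift F n)^[n] = id from funext cycShift_iterate_self, Function.iterate_id]
  rfl

/-! ### Upper bound by counting -/

lemma covering_card_le {F : Type*} [Field F] [Fintype F] {n : ℕ} [NeZero n]
    (U : Submodule F (Fin n → F)) (h : IsCycCovering F n U) :
    Fintype.card (Fin n → F) ≤ n * Nat.card U := by
  classical
  have hpos : 0 < n := Nat.pos_of_ne_zero (NeZero.ne n)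
  have cover : (Finset.univ : Finset (Fin n → F)) ⊆
      (Finset.range n).biUnion (fun r => Finset.univ.filter fun x => (cycShift F n)^[r] x ∈ U) := by
    intro x _
    obtain ⟨r, hr⟩ := h x
    refine Finset.mem_biUnion.mpr ⟨r % n, Finset.mem_range.mpr (Nat.mod_lt _ hpos), ?_⟩
    simp only [Finset.mem_filter, Finset.mem_univ, true_and]
    rw [cycShift_iterate_mod]
    exact hr
  have hcard : ∀ r : ℕ, (Finset.univ.filter fun x => (cycShift F n)^[r] x ∈ U).card = Nat.card U := by
    intro r
    have hbij : Function.Bijective ((cycShift F n)^[r]) := cycShift_bijective.iterate r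
    rw [← Fintype.card_subtype]
    rw [Nat.card_eq_fintype_card]
    exact Fintype.card_congr ((Equiv.ofBijective _ hbij).subtypeEquiv fun x => Iff.rfl)
  calc Fintype.card (Fin n → F) = (Finset.univ : Finset (Fin n → F)).card := rfl
    _ ≤ _ := Finset.card_le_card cover
    _ ≤ ∑ r ∈ Finset.range n, (Finset.univ.filter fun x => (cycShift F n)^[r] x ∈ U).card :=
        Finset.card_biUnion_le
    _ = ∑ _r ∈ Finset.range n, Nat.card U := by simp_rw [hcard]
    _ = n * Nat.card U := by rw [Finset.sum_const, Finset.card_range, smul_eq_mul]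

lemma covering_codim_le {F : Type*} [Field F] [Fintype F] {d n : ℕ} (hd : 0 < d)
    (hn : n = Fintype.card F ^ d - 1) [NeZero n]
    (U : Submodule F (Fin n → F)) (h : IsCycCovering F n U) :
    finrank F (Fin n → F) - finrank F U ≤ d - 1 := by
  classical
  have hq2 : 1 < Fintype.card F := Fintype.one_lt_card
  have h1 : Fintype.card (Fin n → F) = Fintype.card F ^ n := by
    rw [Fintype.card_pi, Finset.prod_const, Finset.card_univ, Fintype.card_fin]
  have h2 : Nat.card U = Fintype.card F ^ finrank F U := by
    haveI : Fintype U := Fintype.ofFinite U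
    rw [Nat.card_eq_fintype_card, card_eq_pow_finrank (K := F) (V := U)]
  have hle := covering_card_le U h
  rw [h1, h2] at hle
  have hn' : n < Fintype.card F ^ d := by
    rw [hn]; exact Nat.sub_lt (Nat.pos_of_ne_zero (pow_ne_zero _ (by omega))) one_pos
  have hlt : Fintype.card F ^ n < Fintype.card F ^ (d + finrank F U) := by
    calc Fintype.card F ^ n ≤ n * Fintype.card F ^ finrank F U := hle
      _ < Fintype.card F ^ d * Fintype.card F ^ finrank F U := by
          apply Nat.mul_lt_mul_of_lt_of_le hn' le_rfl
          exact Nat.pos_of_ne_zero (pow_ne_zero _ (by omega))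
      _ = _ := (pow_add _ _ _).symm
  have := (Nat.pow_lt_pow_iff_right hq2).mp hlt
  rw [Module.finrank_pi, Fintype.card_fin]
  omega

/-! ### Lower bound: an explicit covering subspace of codimension `d - 1` -/

lemma exists_covering_subspace {F : Type*} [Field F] [Fintype F]
    {E : Type*} [Field E] [Algebra F E] [Fintype E] {d : ℕ} (hd : 0 < d)
    (hcardE : Fintype.card E = Fintype.card F ^ d) (hrankE : finrank F E = d)
    {n : ℕ} (hn : n = Fintype.card F ^ d - 1) [NeZero n] :
    ∃ U : Submodule F (Fin n → F), IsCycCovering F n U ∧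
      finrank F (Fin n → F) - finrank F U = d - 1 := by
  classical
  have hq2 : 1 < Fintype.card F := Fintype.one_lt_card
  obtain ⟨g, hg⟩ := IsCyclic.exists_generator (α := Eˣ)
  have horder : orderOf g = n := by
    rw [orderOf_eq_card_of_forall_mem_zpowers hg, Nat.card_eq_fintype_card,
      Fintype.card_units, hcardE, hn]
  have horderE : orderOf (g : E) = n := by rw [orderOf_units, horder]
  set v : Fin n → E := fun i => (g : E) ^ (i : ℕ) with hv
  set T : (Fin n → F) →ₗ[F] E := Fintype.linearCombination F v with hT
  have hpow : ∀ k : ℕ, (g : E) ^ (k % n) = (g : E) ^ k := by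
    intro k
    rw [← horderE, pow_mod_orderOf]
  -- key shift identity
  have key : ∀ x : Fin n → F, (g : E) * T (cycShift F n x) = T x := by
    intro x
    rw [hT, Fintype.linearCombination_apply, Fintype.linearCombination_apply, Finset.mul_sum]
    refine Fintype.sum_equiv (Equiv.addRight (1 : Fin n)) _ _ fun i => ?_
    simp only [Equiv.coe_addRight, cycShift_apply, hv]
    rw [mul_smul_comm, ← pow_succ']
    congr 1
    have h1 : ((i + 1 : Fin n) : ℕ) = ((i : ℕ) + 1) % n := by
      simp [Fin.add_def, Nat.add_mod]
    rw [h1, hpow]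
  have keyr : ∀ (r : ℕ) (x : Fin n → F), (g : E) ^ r * T ((cycShift F n)^[r] x) = T x := by
    intro r
    induction r with
    | zero => intro x; simp
    | succ k ih =>
      intro x
      rw [Function.iterate_succ_apply, pow_succ', mul_assoc, ih (cycShift F n x), key]
  -- surjectivity of T
  have hTsurj : Function.Surjective T := by
    rw [← LinearMap.range_eq_top, hT, Fintype.range_linearCombination]
    rw [Submodule.eq_top_iff']
    intro a
    rcases eq_or_ne a 0 with rfl | ha
    · exact Submodule.zero_mem _
    · apply Submodule.subset_span
      obtain ⟨k, hk⟩ := mem_powers_iff_mem_zpowers.mpr (hg (Units.mk0 a ha))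
      have hk' : (g : E) ^ k = a := by
        have := congrArg (Units.val) hk
        simpa using this
      refine ⟨⟨k % n, Nat.mod_lt _ (Nat.pos_of_ne_zero (NeZero.ne n))⟩, ?_⟩
      simp only [hv]
      rw [hpow]
      exact hk'
  set L : Submodule F E := LinearMap.range (Algebra.linearMap F E) with hL
  refine ⟨Submodule.comap T L, ?_, ?_⟩
  · -- covering
    intro x
    rcases eq_or_ne (T x) 0 with h0 | h0
    · exact ⟨0, by simp [Submodule.mem_comap, h0]⟩
    · obtain ⟨r, hr⟩ := mem_powers_iff_mem_zpowers.mpr (hg (Units.mk0 (T x) h0))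
      have hr' : (g : E) ^ r = T x := by
        have := congrArg (Units.val) hr
        simpa using this
      refine ⟨r, ?_⟩
      simp only [Submodule.mem_comap]
      have h1 : T ((cycShift F n)^[r] x) = 1 := by
        have h2 := keyr r x
        rw [← hr'] at h2
        have hne : (g : E) ^ r ≠ 0 := pow_ne_zero _ (Units.ne_zero g)
        field_simp at h2
        exact h2
      rw [h1]
      exact ⟨1, by simp⟩
  · -- codimension
    have hnd : d ≤ n := by
      have : d < 2 ^ d := Nat.lt_two_pow_self
      have h2 : 2 ^ d ≤ Fintype.card F ^ d := Nat.pow_le_pow_left hq2 d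
      omega
    have hker : finrank F (LinearMap.ker T) = n - d := by
      have := LinearMap.finrank_range_add_finrank_ker T
      rw [LinearMap.range_eq_top.mpr hTsurj, finrank_top, hrankE, Module.finrank_pi,
        Fintype.card_fin] at this
      omega
    have hL1 : finrank F L = 1 := by
      rw [hL, LinearMap.finrank_range_of_inj, Module.finrank_self]
      exact fun a b hab => by
        simpa using (algebraMap F E).injective (by simpa using hab)
    set U := Submodule.comap T L with hU
    have hsub : LinearMap.ker T ≤ U := fun x hx => by
      simp only [hU, Submodule.mem_comap, LinearMap.mem_ker.mp hx]
      exact Submodule.zero_mem _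
    have hres : ∀ x ∈ U, T x ∈ L := fun x hx => hx
    set T' : U →ₗ[F] L := T.restrict hres with hT'
    have hT'surj : Function.Surjective T' := by
      rintro ⟨y, hy⟩
      obtain ⟨x, rfl⟩ := hTsurj y
      exact ⟨⟨x, hy⟩, rfl⟩
    have hkerT' : finrank F (LinearMap.ker T') = n - d := by
      rw [← hker]
      have : LinearMap.ker T' = (LinearMap.ker T).comap U.subtype := by
        ext ⟨x, hx⟩
        simp only [LinearMap.mem_ker, Submodule.mem_comap, Submodule.coe_subtype, hT']
        constructor
        · intro h
          have := congrArg (Subtype.val) h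
          simpa [LinearMap.restrict_apply] using this
        · intro h
          apply Subtype.ext
          simpa [LinearMap.restrict_apply] using h
      rw [this]
      exact LinearEquiv.finrank_eq (Submodule.comapSubtypeEquivOfLe hsub)
    have hrankU : finrank F U = (n - d) + 1 := by
      have := LinearMap.finrank_range_add_finrank_ker T'
      rw [LinearMap.range_eq_top.mpr hT'surj, finrank_top, hL1, hkerT'] at this
      omega
    rw [Module.finrank_pi, Fintype.card_fin, hrankU]
    omega

/-! ### Existence of a degree `d` extension of a finite field -/

universe uF

lemma exists_field_ext (F : Type uF) [Field F] [Fintype F] (d : ℕ) (hd : 0 < d) :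
    ∃ (E : Type uF) (_ : Field E) (_ : Algebra F E) (_ : Fintype E),
      Fintype.card E = Fintype.card F ^ d ∧ Module.finrank F E = d := by
  classical
  set q := Fintype.card F with hq
  have hq2 : 1 < q := Fintype.one_lt_card
  set N := q ^ d with hN
  set f : F[X] := X ^ N - X with hf
  have hfne : f ≠ 0 := FiniteField.X_pow_card_pow_sub_X_ne_zero F hd.ne' hq2
  have hdeg : f.natDegree = N := FiniteField.X_pow_card_pow_sub_X_natDegree_eq F hd.ne' hq2
  set E := SplittingField f with hE
  letI : Field E := inferInstanceAs (Field (SplittingField f))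
  letI : Algebra F E := inferInstanceAs (Algebra F (SplittingField f))
  haveI : FiniteDimensional F E := inferInstanceAs (FiniteDimensional F (SplittingField f))
  haveI : Finite E := Module.finite_of_finite F
  letI : Fintype E := Fintype.ofFinite E
  -- char p facts
  obtain ⟨p, hp⟩ := CharP.exists F
  haveI : CharP F p := hp
  haveI hpp : Fact p.Prime := ⟨(CharP.char_is_prime F p)⟩
  haveI : CharP E p := charP_of_injective_algebraMap (algebraMap F E).injective p
  obtain ⟨m, hpm, hm⟩ := FiniteField.card F p
  have hNp : N = p ^ ((m : ℕ) * d) := by rw [hN, hq, hm, ← pow_mul]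
  -- the set of roots of f is a subalgebra
  set S : Subalgebra F E :=
    { carrier := {x : E | x ^ N = x}
      mul_mem' := by
        intro a b ha hb
        simp only [Set.mem_setOf_eq] at *
        rw [mul_pow, ha, hb]
      add_mem' := by
        intro a b ha hb
        simp only [Set.mem_setOf_eq] at *
        rw [hNp] at *
        rw [add_pow_char_pow, ha, hb]
      one_mem' := by
        simp only [Set.mem_setOf_eq, one_pow]
      zero_mem' := by
        simp only [Set.mem_setOf_eq]
        exact zero_pow (by positivity)
      algebraMap_mem' := by
        intro r
        simp only [Set.mem_setOf_eq]
        rw [← map_pow, FiniteField.pow_card_pow] } with hS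
  have hroot : ∀ x : E, x ^ N = x := by
    have htop : S = ⊤ := by
      rw [← top_le_iff, ← SplittingField.adjoin_rootSet f]
      apply Algebra.adjoin_le
      intro x hx
      have := (mem_rootSet_of_ne hfne).mp hx
      simp only [hf, map_sub, map_pow, aeval_X] at this
      show x ^ N = x
      have := sub_eq_zero.mp this
      exact this
    intro x
    have : x ∈ S := htop ▸ Algebra.mem_top
    exact this
  -- card E = N
  have hsep : f.Separable := by
    rw [hf, hNp]
    exact galois_poly_separable p _ (dvd_pow_self p (by positivity))
  have hcardroot : Fintype.card (f.rootSet E) = N := by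
    rw [card_rootSet_eq_natDegree hsep (SplittingField.splits f), hdeg]
  have hrsuniv : f.rootSet E = Set.univ := by
    rw [Set.eq_univ_iff_forall]
    intro x
    rw [mem_rootSet_of_ne hfne]
    simp only [hf, map_sub, map_pow, aeval_X]
    rw [hroot x, sub_self]
  have hcardE : Fintype.card E = N := by
    have e : f.rootSet E ≃ E := (Equiv.setCongr hrsuniv).trans (Equiv.Set.univ E)
    rw [← Fintype.card_congr e, hcardroot]
  have hrank : Module.finrank F E = d := by
    have := card_eq_pow_finrank (K := F) (V := E)
    rw [hcardE, hN, ← hq] at this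
    exact (Nat.pow_right_injective hq2 this.symm)
  exact ⟨E, _, _, _, hcardE, hrank⟩

/-- For a prime power q and d ≥ 1, h_q(q^d − 1) = d − 1. -/
theorem stmt_4 (F : Type*) [Field F] [Fintype F] (d : ℕ) (hd : 0 < d) :
    hq F (Fintype.card F ^ d - 1) = d - 1 := by
  classical
  set n := Fintype.card F ^ d - 1 with hn
  have hq2 : 1 < Fintype.card F := Fintype.one_lt_card
  haveI : NeZero n := ⟨by
    have : Fintype.card F ≤ Fintype.card F ^ d := Nat.le_self_pow hd.ne' _
    omega⟩
  obtain ⟨E, _, _, _, hcardE, hrankE⟩ := exists_field_ext F d hd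
  obtain ⟨U, hU, hcodim⟩ := exists_covering_subspace hd hcardE hrankE hn
  have hub : ∀ k ∈ {k | ∃ U : Submodule F (Fin n → F), IsCycCovering F n U ∧
      Module.finrank F (Fin n → F) - Module.finrank F U = k}, k ≤ d - 1 := by
    rintro k ⟨V, hV, rfl⟩
    exact covering_codim_le hd hn V hV
  unfold hq
  apply le_antisymm
  · exact csSup_le ⟨d - 1, U, hU, hcodim⟩ hub
  · exact le_csSup ⟨d - 1, hub⟩ ⟨U, hU, hcodim⟩
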